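/- Let n ≥ 3 be an integer and p an odd prime with p > n. Let J be the n×n matrix over ZMod p with J·e_i = e_{i+1} for 1 ≤ i < n and J·e_n = 0. Set P = 1 + J and Q = 1 + J + J², viewed as elements of the general linear group GL_n(ZMod p) (both are unipotent, hence invertible). Then the cyclic subgroups generated by P and by Q intersect trivially: Subgroup.zpowers P ⊓ Subgroup.zpowers Q = ⊥. -/
import Mathlib

open Matrix Polynomial

/-- The `n × n` nilpotent Jordan block over a ring `R`: `J e_i = e_{i+1}` for `i < n`
and `J e_n = 0`, i.e. the matrix with ones on the subdiagonal and zeros elsewhere. -/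
def jordanJ (n : ℕ) (R : Type) [Ring R] : Matrix (Fin n) (Fin n) R :=
  Matrix.of fun i j => if (i : ℕ) = (j : ℕ) + 1 then 1 else 0

section Aux

variable {n : ℕ} {R : Type} [CommRing R]

lemma jordanJ_pow_apply (m : ℕ) (i j : Fin n) :
    ((jordanJ n R) ^ m) i j = if (i : ℕ) = (j : ℕ) + m then 1 else 0 := by
  induction m generalizing j with
  | zero =>
    simp only [pow_zero, Matrix.one_apply, Nat.add_zero]
    simp [Fin.ext_iff]
  | succ m ih =>
    rw [pow_succ, Matrix.mul_apply]
    by_cases h : (j : ℕ) + 1 < n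
    · rw [Finset.sum_eq_single (⟨(j : ℕ) + 1, h⟩ : Fin n)]
      · rw [ih]
        have hc : ((i : ℕ) = ((⟨(j : ℕ) + 1, h⟩ : Fin n) : ℕ) + m)
            ↔ ((i : ℕ) = (j : ℕ) + (m + 1)) := by
          show (i : ℕ) = (j : ℕ) + 1 + m ↔ _
          omega
        simp only [jordanJ, Matrix.of_apply, if_pos rfl, mul_one, hc]
        simp
      · intro b _ hb
        have : ¬ ((b : ℕ) = (j : ℕ) + 1) := by
          intro hbv; exact hb (Fin.ext hbv)
        simp [jordanJ, this]
      · intro hmem; exact absurd (Finset.mem_univ _) hmem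
    · have hz : ∀ k : Fin n, ((jordanJ n R) ^ m) i k * (jordanJ n R) k j = 0 := by
        intro k
        have : ¬ ((k : ℕ) = (j : ℕ) + 1) := by omega
        simp [jordanJ, this]
      rw [Finset.sum_eq_zero fun k _ => hz k]
      have : ¬ ((i : ℕ) = (j : ℕ) + (m + 1)) := by omega
      simp [this]

lemma jordanJ_pow_eq_zero {m : ℕ} (hm : n ≤ m) : (jordanJ n R) ^ m = 0 := by
  ext i j
  rw [jordanJ_pow_apply]
  have : ¬ ((i : ℕ) = (j : ℕ) + m) := by omega
  simp [this]

lemma aeval_jordanJ_apply (f : R[X]) (i j : Fin n) (hij : (j : ℕ) ≤ (i : ℕ)) :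
    (Polynomial.aeval (jordanJ n R) f) i j = f.coeff ((i : ℕ) - (j : ℕ)) := by
  rw [Polynomial.aeval_eq_sum_range]
  rw [Matrix.sum_apply]
  have hterm : ∀ m ∈ Finset.range (f.natDegree + 1),
      (f.coeff m • (jordanJ n R) ^ m) i j
        = if m = (i : ℕ) - (j : ℕ) then f.coeff m else 0 := by
    intro m _
    rw [Matrix.smul_apply, jordanJ_pow_apply, smul_eq_mul]
    by_cases h : m = (i : ℕ) - (j : ℕ)
    · have hc : (i : ℕ) = (j : ℕ) + m := by omega
      rw [if_pos hc, if_pos h, mul_one]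
    · have hc : ¬ ((i : ℕ) = (j : ℕ) + m) := by omega
      rw [if_neg hc, if_neg h, mul_zero]
  rw [Finset.sum_congr rfl hterm, Finset.sum_ite_eq' (Finset.range (f.natDegree + 1))]
  by_cases h : (i : ℕ) - (j : ℕ) ∈ Finset.range (f.natDegree + 1)
  · simp [h]
  · rw [if_neg h]
    rw [Finset.mem_range, not_lt] at h
    exact (Polynomial.coeff_eq_zero_of_natDegree_lt (by omega)).symm

lemma binom_coeffs (t : ℕ) :
    ((1 + X : R[X]) ^ t).coeff 0 = 1 ∧ ((1 + X : R[X]) ^ t).coeff 1 = (t : R) ∧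
      2 * ((1 + X : R[X]) ^ t).coeff 2 = (t : R) ^ 2 - t := by
  induction t with
  | zero => simp [Polynomial.coeff_one]
  | succ t ih =>
    obtain ⟨h0, h1, h2⟩ := ih
    rw [pow_succ, mul_add, mul_one]
    refine ⟨?_, ?_, ?_⟩
    · rw [Polynomial.coeff_add, Polynomial.coeff_mul_X_zero, h0, add_zero]
    · rw [Polynomial.coeff_add,
        show (1 : ℕ) = 0 + 1 from rfl, Polynomial.coeff_mul_X, h0,
        ← show (1 : ℕ) = 0 + 1 from rfl, h1]
      push_cast; ring
    · rw [Polynomial.coeff_add,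
        show (2 : ℕ) = 1 + 1 from rfl, Polynomial.coeff_mul_X,
        ← show (2 : ℕ) = 1 + 1 from rfl]
      push_cast [Nat.cast_add]
      linear_combination h2 + 2 * h1

lemma trinom_coeffs (t : ℕ) :
    ((1 + X + X ^ 2 : R[X]) ^ t).coeff 0 = 1 ∧
      ((1 + X + X ^ 2 : R[X]) ^ t).coeff 1 = (t : R) ∧
      2 * ((1 + X + X ^ 2 : R[X]) ^ t).coeff 2 = (t : R) ^ 2 + t := by
  induction t with
  | zero => simp [Polynomial.coeff_one]
  | succ t ih =>
    obtain ⟨h0, h1, h2⟩ := ih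
    rw [pow_succ, mul_add, mul_add, mul_one]
    refine ⟨?_, ?_, ?_⟩
    · rw [Polynomial.coeff_add, Polynomial.coeff_add, h0,
        Polynomial.coeff_mul_X_zero, Polynomial.coeff_mul_X_pow' _ 2 0]
      norm_num
    · rw [Polynomial.coeff_add, Polynomial.coeff_add,
        show (1 : ℕ) = 0 + 1 from rfl, Polynomial.coeff_mul_X,
        Polynomial.coeff_mul_X_pow' _ 2 (0 + 1), h0,
        ← show (1 : ℕ) = 0 + 1 from rfl, h1]
      norm_num
    · rw [Polynomial.coeff_add, Polynomial.coeff_add,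
        show (2 : ℕ) = 1 + 1 from rfl, Polynomial.coeff_mul_X,
        Polynomial.coeff_mul_X_pow' _ 2 (1 + 1),
        ← show (2 : ℕ) = 1 + 1 from rfl]
      norm_num
      linear_combination h2 + 2 * h1 + 2 * h0

lemma exists_pow_eq {G : Type*} [Group G] {g x : G} {p : ℕ} (hp : 0 < p)
    (hg : g ^ p = 1) (h : x ∈ Subgroup.zpowers g) : ∃ m : ℕ, x = g ^ m := by
  obtain ⟨a, ha⟩ := h
  refine ⟨(a % (p : ℤ)).toNat, ?_⟩
  have hp' : (p : ℤ) ≠ 0 := by exact_mod_cast hp.ne'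
  have h0 : (0 : ℤ) ≤ a % p := Int.emod_nonneg a hp'
  have ha' : g ^ a = x := ha
  rw [← ha']
  conv_lhs => rw [← Int.emod_add_mul_ediv a p]
  rw [_root_.zpow_add, _root_.zpow_mul, zpow_natCast, hg, _root_.one_zpow, mul_one,
    ← zpow_natCast, Int.toNat_of_nonneg h0]

end Aux

/-- For `n ≥ 3` and an odd prime `p > n`, the cyclic subgroups of `GL n (ZMod p)`
generated by `P = 1 + J` and `Q = 1 + J + J²` intersect trivially. -/
theorem zpowers_inter_zpowers_eq_bot (n p : ℕ) (hn : 3 ≤ n) (hp : p.Prime) (hodd : Odd p)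
    (hpn : n < p) (P Q : GL (Fin n) (ZMod p))
    (hP : (P : Matrix (Fin n) (Fin n) (ZMod p)) = 1 + jordanJ n (ZMod p))
    (hQ : (Q : Matrix (Fin n) (Fin n) (ZMod p)) =
      1 + jordanJ n (ZMod p) + jordanJ n (ZMod p) ^ 2) :
    Subgroup.zpowers P ⊓ Subgroup.zpowers Q = ⊥ := by
  haveI : Fact p.Prime := ⟨hp⟩
  haveI : NeZero n := ⟨by omega⟩
  set R := ZMod p
  set J : Matrix (Fin n) (Fin n) R := jordanJ n R with hJ
  have hJp : J ^ p = 0 := jordanJ_pow_eq_zero (by omega)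
  have hJ2p : (J ^ 2) ^ p = 0 := by
    rw [← pow_mul]; exact jordanJ_pow_eq_zero (by omega)
  -- P ^ p = 1 and Q ^ p = 1
  have hPp : P ^ p = 1 := by
    ext : 1
    push_cast [hP]
    rw [add_pow_char_of_commute _ (Commute.one_left J), one_pow, hJp, add_zero]
  have hQp : Q ^ p = 1 := by
    ext : 1
    push_cast [hQ]
    rw [add_pow_char_of_commute _ (((Commute.one_left J).add_left (Commute.refl J)).pow_right 2),
      add_pow_char_of_commute _ (Commute.one_left J), one_pow, hJp, hJ2p, add_zero, add_zero]
  rw [Subgroup.eq_bot_iff_forall]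
  intro x hx
  rw [Subgroup.mem_inf] at hx
  obtain ⟨s, hs⟩ := exists_pow_eq hp.pos hPp hx.1
  obtain ⟨t, ht⟩ := exists_pow_eq hp.pos hQp hx.2
  -- matrix-level equation
  have hPa : (P : Matrix (Fin n) (Fin n) R) = Polynomial.aeval J (1 + X : R[X]) := by
    simp [hP]
  have hQa : (Q : Matrix (Fin n) (Fin n) R) = Polynomial.aeval J (1 + X + X ^ 2 : R[X]) := by
    simp [hQ]
  have hmat : Polynomial.aeval J ((1 + X : R[X]) ^ s)
      = Polynomial.aeval J ((1 + X + X ^ 2 : R[X]) ^ t) := by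
    rw [map_pow, map_pow, ← hPa, ← hQa]
    have := hs.symm.trans ht
    calc (P : Matrix (Fin n) (Fin n) R) ^ s = ((P ^ s : GL (Fin n) R) : Matrix (Fin n) (Fin n) R) := by
          push_cast; rfl
      _ = ((Q ^ t : GL (Fin n) R) : Matrix (Fin n) (Fin n) R) := by rw [this]
      _ = (Q : Matrix (Fin n) (Fin n) R) ^ t := by push_cast; rfl
  have e1 : ((1 + X : R[X]) ^ s).coeff 1 = ((1 + X + X ^ 2 : R[X]) ^ t).coeff 1 := by
    have := congrFun (congrFun hmat ⟨1, by omega⟩) ⟨0, by omega⟩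
    rwa [aeval_jordanJ_apply _ _ _ (by simp), aeval_jordanJ_apply _ _ _ (by simp)] at this
  have e2 : ((1 + X : R[X]) ^ s).coeff 2 = ((1 + X + X ^ 2 : R[X]) ^ t).coeff 2 := by
    have := congrFun (congrFun hmat ⟨2, by omega⟩) ⟨0, by omega⟩
    rwa [aeval_jordanJ_apply _ _ _ (by simp), aeval_jordanJ_apply _ _ _ (by simp)] at this
  obtain ⟨-, hb1, hb2⟩ := binom_coeffs (R := R) s
  obtain ⟨-, ht1, ht2⟩ := trinom_coeffs (R := R) t
  rw [hb1, ht1] at e1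
  have e2' : (s : R) ^ 2 - s = (t : R) ^ 2 + t := by
    rw [← hb2, ← ht2, e2]
  rw [← e1] at e2'
  have h2s : (2 : R) * s = 0 := by linear_combination -e2'
  have h2 : (2 : R) ≠ 0 := by
    have : ((2 : ℕ) : R) ≠ 0 := by
      rw [Ne, ZMod.natCast_eq_zero_iff]
      intro hdvd
      have := (Nat.prime_dvd_prime_iff_eq hp Nat.prime_two).mp hdvd
      rw [this] at hodd
      exact (Nat.not_odd_iff_even.mpr even_two) hodd
    simpa using this
  have hs0 : (s : R) = 0 := by
    rcases mul_eq_zero.mp h2s with h | h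
    · exact absurd h h2
    · exact h
  have hps : p ∣ s := by
    rwa [ZMod.natCast_eq_zero_iff] at hs0
  obtain ⟨k, hk⟩ := hps
  rw [hs, hk, pow_mul, hPp, one_pow]
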